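/- On the flat cylinder ℝ²/⟨translation by vector a⟩, a geodesic arc that lifts to a planar segment is a shortest path (i.e., realizes the quotient distance between its endpoints) if and only if the projection of its lift onto the direction of a has length at most |a|/2. -/

import Mathlib

open scoped RealInnerProductSpace

lemma norm_sq_sub_int_smul (v a : EuclideanSpace ℝ (Fin 2)) (k : ℤ) :
    ‖v - (k : ℝ) • a‖ ^ 2 = ‖v‖ ^ 2 - 2 * (k : ℝ) * ⟪v, a⟫ + (k : ℝ) ^ 2 * ‖a‖ ^ 2 := by
  rw [norm_sub_sq_real, real_inner_smul_right, norm_smul]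
  simp [mul_pow]
  ring

/-- On the flat cylinder `ℝ²/⟨a⟩`, the planar segment from `x` to `y` projects to a shortest
path (it realizes the quotient distance, i.e. `‖x - y‖ ≤ ‖x - y - k • a‖` for all `k ∈ ℤ`)
if and only if the projection of `x - y` onto the direction of `a` has length at most
`|a|/2`. -/
theorem cylinder_segment_shortest_iff (a x y : EuclideanSpace ℝ (Fin 2)) (ha : a ≠ 0) :
    (∀ k : ℤ, ‖x - y‖ ≤ ‖x - y - k • a‖) ↔ |⟪x - y, a⟫| / ‖a‖ ≤ ‖a‖ / 2 := by
  have hna : (0:ℝ) < ‖a‖ := norm_pos_iff.mpr ha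
  set v := x - y with hv
  have key : ∀ k : ℤ, (‖v‖ ≤ ‖v - k • a‖ ↔
      0 ≤ (k : ℝ) ^ 2 * ‖a‖ ^ 2 - 2 * (k : ℝ) * ⟪v, a⟫) := by
    intro k
    rw [← Int.cast_smul_eq_zsmul ℝ]
    constructor <;> intro h <;> nlinarith [norm_sq_sub_int_smul v a k, norm_nonneg v,
      norm_nonneg (v - (k:ℝ) • a)]
  rw [div_le_div_iff₀ hna (by norm_num : (0:ℝ) < 2)]
  constructor
  · intro h
    have h1 := (key 1).mp (h 1)
    have h2 := (key (-1)).mp (h (-1))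
    push_cast at h1 h2
    rcases abs_cases (⟪v, a⟫ : ℝ) with ⟨he, _⟩ | ⟨he, _⟩ <;> rw [he] <;> nlinarith
  · intro h k
    rw [key k]
    have hk : |(k:ℝ)| * 1 ≤ |(k:ℝ)| * |(k:ℝ)| ∨ (k:ℝ) = 0 := by
      rcases eq_or_ne k 0 with rfl | hk
      · right; simp
      · left
        have : (1:ℝ) ≤ |(k:ℝ)| := by
          rw [← Int.cast_abs]; exact_mod_cast Int.one_le_abs hk
        nlinarith [abs_nonneg (k:ℝ)]
    rcases hk with hk | hk
    · have h3 : 2 * (k:ℝ) * ⟪v, a⟫ ≤ 2 * |(k:ℝ)| * |⟪v, a⟫| := by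
        calc 2 * (k:ℝ) * ⟪v, a⟫ ≤ |2 * (k:ℝ) * ⟪v, a⟫| := le_abs_self _
        _ = 2 * |(k:ℝ)| * |⟪v, a⟫| := by rw [abs_mul, abs_mul]; simp
      nlinarith [sq_abs (k:ℝ), abs_nonneg (⟪v, a⟫), mul_le_mul_of_nonneg_left h (abs_nonneg (k:ℝ))]
    · simp [hk]
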